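/- Let n ≥ 1 and let d = (d_0,…,d_n) and e = (e_0,…,e_n) be degree sequences with entries in ℤ ∪ {∞}. Fix an index i with 0 ≤ i < n such that d_i = e_i and d_{i+1} = e_{i+1} are both finite. If d_k ≤ e_k for every k and d ≠ e, then β_i(π_d)/β_{i+1}(π_d) < β_i(π_e)/β_{i+1}(π_e); equivalently, β_i(π_d)·β_{i+1}(π_e) < β_i(π_e)·β_{i+1}(π_d) as positive rational numbers. -/

import Mathlib

open Finset

lemma chainTop {n : ℕ} (d : Fin (n + 1) → WithTop ℤ)
    (hd : ∀ k : ℕ, (hk : k + 1 ≤ n) → d ⟨k, Nat.lt_succ_of_le (Nat.le_of_succ_le hk)⟩ + 1 ≤ d ⟨k + 1, Nat.lt_succ_of_le hk⟩) :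
    ∀ j k : ℕ, (hjk : j < k) → (hkn : k ≤ n) → d ⟨j, by omega⟩ + 1 ≤ d ⟨k, by omega⟩ := by
  intro j k
  induction k with
  | zero => omega
  | succ m ih =>
    intro hjk hkn
    rcases Nat.lt_or_ge j m with h | h
    · exact le_trans (ih h (by omega))
        (le_trans (le_add_of_nonneg_right zero_le_one) (hd m (by omega)))
    · have hjm : j = m := by omega
      subst hjm
      exact hd j (by omega)

lemma belowTop {n : ℕ} (d : Fin (n + 1) → WithTop ℤ)
    (hd : ∀ j k : ℕ, (hjk : j < k) → (hkn : k ≤ n) → d ⟨j, by omega⟩ + 1 ≤ d ⟨k, by omega⟩)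
    {m : ℕ} (hm : m ≤ n) {c : ℤ} (hc : d ⟨m, by omega⟩ = (c : WithTop ℤ))
    (k : Fin (n + 1)) (hk : k.val < m) : ∃ x : ℤ, d k = (x : WithTop ℤ) ∧ x + 1 ≤ c := by
  have h2 : d k + 1 ≤ (c : WithTop ℤ) := by
    rw [← hc]; exact hd k.val m hk hm
  have hne : d k ≠ ⊤ := by
    intro ht; rw [ht] at h2; simp at h2
  obtain ⟨x, hx⟩ := WithTop.ne_top_iff_exists.mp hne
  refine ⟨x, hx.symm, ?_⟩
  rw [← hx] at h2
  exact_mod_cast h2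

lemma aboveTop {n : ℕ} (d : Fin (n + 1) → WithTop ℤ)
    (hd : ∀ j k : ℕ, (hjk : j < k) → (hkn : k ≤ n) → d ⟨j, by omega⟩ + 1 ≤ d ⟨k, by omega⟩)
    {m : ℕ} (hm : m ≤ n) {c : ℤ} (hc : d ⟨m, by omega⟩ = (c : WithTop ℤ))
    (k : Fin (n + 1)) (hk : m < k.val) {x : ℤ} (hx : d k = (x : WithTop ℤ)) : c + 1 ≤ x := by
  have h2 : (c : WithTop ℤ) + 1 ≤ (x : WithTop ℤ) := by
    rw [← hc, ← hx]; exact hd m k.val hk (by omega)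
  exact_mod_cast h2

lemma pos_fac {u v : ℚ} (h : u ≠ v) : 0 < 1 / |u - v| :=
  one_div_pos.mpr (abs_pos.mpr (sub_ne_zero.mpr h))

lemma key_le {a b x y : ℚ} (hab : a < b) (hxy : x ≤ y) (h : y < a ∨ b < x) :
    1 / |a - x| * (1 / |b - y|) ≤ 1 / |a - y| * (1 / |b - x|) := by
  rcases h with h | h
  · rw [abs_of_pos (show (0:ℚ) < a - x by linarith), abs_of_pos (show (0:ℚ) < b - y by linarith),
      abs_of_pos (show (0:ℚ) < a - y by linarith), abs_of_pos (show (0:ℚ) < b - x by linarith),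
      div_mul_div_comm, div_mul_div_comm, one_mul]
    exact one_div_le_one_div_of_le (by nlinarith)
      (by nlinarith [mul_nonneg (sub_nonneg.mpr hab.le) (sub_nonneg.mpr hxy)])
  · rw [abs_of_neg (show a - x < (0:ℚ) by linarith), abs_of_neg (show b - y < (0:ℚ) by linarith),
      abs_of_neg (show a - y < (0:ℚ) by linarith), abs_of_neg (show b - x < (0:ℚ) by linarith),
      div_mul_div_comm, div_mul_div_comm, one_mul]
    exact one_div_le_one_div_of_le (by nlinarith)
      (by nlinarith [mul_nonneg (sub_nonneg.mpr hab.le) (sub_nonneg.mpr hxy)])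

lemma key_lt {a b x y : ℚ} (hab : a < b) (hxy : x < y) (h : y < a ∨ b < x) :
    1 / |a - x| * (1 / |b - y|) < 1 / |a - y| * (1 / |b - x|) := by
  rcases h with h | h
  · rw [abs_of_pos (show (0:ℚ) < a - x by linarith), abs_of_pos (show (0:ℚ) < b - y by linarith),
      abs_of_pos (show (0:ℚ) < a - y by linarith), abs_of_pos (show (0:ℚ) < b - x by linarith),
      div_mul_div_comm, div_mul_div_comm, one_mul]
    exact one_div_lt_one_div_of_lt (by nlinarith)
      (by nlinarith [mul_pos (sub_pos.mpr hab) (sub_pos.mpr hxy)])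
  · rw [abs_of_neg (show a - x < (0:ℚ) by linarith), abs_of_neg (show b - y < (0:ℚ) by linarith),
      abs_of_neg (show a - y < (0:ℚ) by linarith), abs_of_neg (show b - x < (0:ℚ) by linarith),
      div_mul_div_comm, div_mul_div_comm, one_mul]
    exact one_div_lt_one_div_of_lt (by nlinarith)
      (by nlinarith [mul_pos (sub_pos.mpr hab) (sub_pos.mpr hxy)])

lemma key2 {a b x : ℚ} (hab : a < b) (hbx : b < x) : 1 / |a - x| < 1 / |b - x| := by
  rw [abs_of_neg (show a - x < (0:ℚ) by linarith), abs_of_neg (show b - x < (0:ℚ) by linarith)]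
  exact one_div_lt_one_div_of_lt (by linarith) (by linarith)


/-- The `i`-th Betti number of the pure diagram `π_d` of a degree sequence `d` with
entries in `ℤ ∪ {∞}` (modeled as `WithTop ℤ`): the product, over all indices `k ≠ i`
with `d k` finite, of `1/|d_i - d_k|`, as a rational number. -/
def bettiTop {n : ℕ} (d : Fin (n + 1) → WithTop ℤ) (i : Fin (n + 1)) : ℚ :=
  ∏ k ∈ Finset.univ.filter (fun k => k ≠ i ∧ d k ≠ ⊤),
    (1 : ℚ) / |((((d i).untopD 0 : ℤ) : ℚ) - (((d k).untopD 0 : ℤ) : ℚ))|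

/-- **Monotonicity Principle** (for degree sequences with possibly infinite entries).
If `d` and `e` are degree sequences of length `n + 1` agreeing in the (finite) positions
`i` and `i + 1`, with `d_k ≤ e_k` for all `k` and `d ≠ e`, then
`β_i(π_d)/β_{i+1}(π_d) < β_i(π_e)/β_{i+1}(π_e)`, i.e. cross-multiplying,
`β_i(π_d)·β_{i+1}(π_e) < β_i(π_e)·β_{i+1}(π_d)`. -/
theorem monotonicity_principle_withTop {n : ℕ} (hn : 1 ≤ n)
    (d e : Fin (n + 1) → WithTop ℤ)
    (hd : ∀ k : ℕ, (hk : k + 1 ≤ n) → d ⟨k, by omega⟩ + 1 ≤ d ⟨k + 1, by omega⟩)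
    (he : ∀ k : ℕ, (hk : k + 1 ≤ n) → e ⟨k, by omega⟩ + 1 ≤ e ⟨k + 1, by omega⟩)
    (i : ℕ) (hi : i < n)
    (hdei : d ⟨i, by omega⟩ = e ⟨i, by omega⟩)
    (hdei1 : d ⟨i + 1, by omega⟩ = e ⟨i + 1, by omega⟩)
    (hfin : d ⟨i, by omega⟩ ≠ ⊤)
    (hfin1 : d ⟨i + 1, by omega⟩ ≠ ⊤)
    (hle : ∀ k, d k ≤ e k) (hne : d ≠ e) :
    bettiTop d ⟨i, by omega⟩ * bettiTop e ⟨i + 1, by omega⟩ <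
      bettiTop e ⟨i, by omega⟩ * bettiTop d ⟨i + 1, by omega⟩ := by
  have hin : i < n + 1 := by omega
  have hin1 : i + 1 < n + 1 := by omega
  show bettiTop d ⟨i, hin⟩ * bettiTop e ⟨i + 1, hin1⟩ <
      bettiTop e ⟨i, hin⟩ * bettiTop d ⟨i + 1, hin1⟩
  set I : Fin (n + 1) := ⟨i, hin⟩ with hIdef
  set I1 : Fin (n + 1) := ⟨i + 1, hin1⟩ with hI1def
  obtain ⟨a, ha⟩ := WithTop.ne_top_iff_exists.mp hfin
  obtain ⟨b, hb⟩ := WithTop.ne_top_iff_exists.mp hfin1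
  have hda : d I = (a : WithTop ℤ) := ha.symm
  have hdb : d I1 = (b : WithTop ℤ) := hb.symm
  have hea : e I = (a : WithTop ℤ) := by rw [← hda]; exact hdei.symm
  have heb : e I1 = (b : WithTop ℤ) := by rw [← hdb]; exact hdei1.symm
  have hcd := chainTop d hd
  have hce := chainTop e he
  have h1 : (a : WithTop ℤ) + 1 ≤ (b : WithTop ℤ) := by
    rw [← hda, ← hdb]; exact hcd i (i + 1) (by omega) (by omega)
  have hab : a + 1 ≤ b := by exact_mod_cast h1
  have habQ : (a : ℚ) < (b : ℚ) := by exact_mod_cast (show a < b by omega)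
  have hII1 : I ≠ I1 := Fin.ne_of_val_ne (by simp [hIdef, hI1def])
  obtain ⟨k0, hk0⟩ := Function.ne_iff.mp hne
  have hk0I : k0 ≠ I := by rintro rfl; exact hk0 (hda.trans hea.symm)
  have hk0I1 : k0 ≠ I1 := by rintro rfl; exact hk0 (hdb.trans heb.symm)
  have key : ∀ k : Fin (n + 1),
      0 < ((if k ≠ I ∧ d k ≠ ⊤ then (1:ℚ) / |((a : ℤ) : ℚ) - (((d k).untopD 0 : ℤ) : ℚ)| else 1) *
        (if k ≠ I1 ∧ e k ≠ ⊤ then (1:ℚ) / |((b : ℤ) : ℚ) - (((e k).untopD 0 : ℤ) : ℚ)| else 1)) ∧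
      ((if k ≠ I ∧ d k ≠ ⊤ then (1:ℚ) / |((a : ℤ) : ℚ) - (((d k).untopD 0 : ℤ) : ℚ)| else 1) *
        (if k ≠ I1 ∧ e k ≠ ⊤ then (1:ℚ) / |((b : ℤ) : ℚ) - (((e k).untopD 0 : ℤ) : ℚ)| else 1) ≤
       (if k ≠ I ∧ e k ≠ ⊤ then (1:ℚ) / |((a : ℤ) : ℚ) - (((e k).untopD 0 : ℤ) : ℚ)| else 1) *
        (if k ≠ I1 ∧ d k ≠ ⊤ then (1:ℚ) / |((b : ℤ) : ℚ) - (((d k).untopD 0 : ℤ) : ℚ)| else 1)) ∧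
      (d k ≠ e k →
       (if k ≠ I ∧ d k ≠ ⊤ then (1:ℚ) / |((a : ℤ) : ℚ) - (((d k).untopD 0 : ℤ) : ℚ)| else 1) *
        (if k ≠ I1 ∧ e k ≠ ⊤ then (1:ℚ) / |((b : ℤ) : ℚ) - (((e k).untopD 0 : ℤ) : ℚ)| else 1) <
       (if k ≠ I ∧ e k ≠ ⊤ then (1:ℚ) / |((a : ℤ) : ℚ) - (((e k).untopD 0 : ℤ) : ℚ)| else 1) *
        (if k ≠ I1 ∧ d k ≠ ⊤ then (1:ℚ) / |((b : ℤ) : ℚ) - (((d k).untopD 0 : ℤ) : ℚ)| else 1)) := by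
    intro k
    by_cases hkI : k = I
    · subst hkI
      rw [if_neg (show ¬(I ≠ I ∧ d I ≠ ⊤) from fun h => h.1 rfl),
        if_neg (show ¬(I ≠ I ∧ e I ≠ ⊤) from fun h => h.1 rfl),
        if_pos (show I ≠ I1 ∧ e I ≠ ⊤ from ⟨hII1, by rw [hea]; exact WithTop.coe_ne_top⟩),
        if_pos (show I ≠ I1 ∧ d I ≠ ⊤ from ⟨hII1, by rw [hda]; exact WithTop.coe_ne_top⟩),
        hea, hda, WithTop.untopD_coe]
      exact ⟨mul_pos one_pos (pos_fac habQ.ne'), le_refl _, fun h => absurd rfl h⟩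
    by_cases hkI1 : k = I1
    · subst hkI1
      rw [if_pos (show I1 ≠ I ∧ d I1 ≠ ⊤ from
            ⟨Ne.symm hII1, by rw [hdb]; exact WithTop.coe_ne_top⟩),
        if_neg (show ¬(I1 ≠ I1 ∧ e I1 ≠ ⊤) from fun h => h.1 rfl),
        if_pos (show I1 ≠ I ∧ e I1 ≠ ⊤ from
            ⟨Ne.symm hII1, by rw [heb]; exact WithTop.coe_ne_top⟩),
        if_neg (show ¬(I1 ≠ I1 ∧ d I1 ≠ ⊤) from fun h => h.1 rfl),
        hdb, heb, WithTop.untopD_coe]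
      exact ⟨mul_pos (pos_fac habQ.ne) one_pos, le_refl _, fun h => absurd rfl h⟩
    have hkv : k.val ≠ i := fun h => hkI (Fin.ext h)
    have hkv1 : k.val ≠ i + 1 := fun h => hkI1 (Fin.ext h)
    have htri : k.val < i ∨ i + 1 < k.val := by omega
    rcases htri with hklt | hkgt
    · obtain ⟨x, hx, hxa⟩ := belowTop d hcd (show i ≤ n by omega) hda k hklt
      obtain ⟨y, hy, hya⟩ := belowTop e hce (show i ≤ n by omega) hea k hklt
      have hxy : x ≤ y := by
        have := hle k; rw [hx, hy] at this; exact_mod_cast this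
      have hxyQ : (x : ℚ) ≤ y := by exact_mod_cast hxy
      have hyaQ : (y : ℚ) < a := by exact_mod_cast (show y < a by omega)
      have hxaQ : (x : ℚ) < a := by exact_mod_cast (show x < a by omega)
      have hybQ : (y : ℚ) < b := by exact_mod_cast (show y < b by omega)
      rw [hx, hy,
        if_pos (show k ≠ I ∧ ((x : ℤ) : WithTop ℤ) ≠ ⊤ from ⟨hkI, WithTop.coe_ne_top⟩),
        if_pos (show k ≠ I1 ∧ ((y : ℤ) : WithTop ℤ) ≠ ⊤ from ⟨hkI1, WithTop.coe_ne_top⟩),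
        if_pos (show k ≠ I ∧ ((y : ℤ) : WithTop ℤ) ≠ ⊤ from ⟨hkI, WithTop.coe_ne_top⟩),
        if_pos (show k ≠ I1 ∧ ((x : ℤ) : WithTop ℤ) ≠ ⊤ from ⟨hkI1, WithTop.coe_ne_top⟩),
        WithTop.untopD_coe, WithTop.untopD_coe]
      refine ⟨mul_pos (pos_fac hxaQ.ne') (pos_fac hybQ.ne'), ?_, ?_⟩
      · exact key_le habQ hxyQ (Or.inl hyaQ)
      · intro hne'
        have hxy' : x < y := lt_of_le_of_ne hxy (fun h => hne' (by rw [h]))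
        exact key_lt habQ (by exact_mod_cast hxy') (Or.inl hyaQ)
    · rcases eq_or_ne (d k) ⊤ with hx | hx
      · have hy : e k = ⊤ := top_le_iff.mp (hx ▸ hle k)
        rw [hx, hy,
          if_neg (show ¬(k ≠ I ∧ (⊤ : WithTop ℤ) ≠ ⊤) from fun h => h.2 rfl),
          if_neg (show ¬(k ≠ I1 ∧ (⊤ : WithTop ℤ) ≠ ⊤) from fun h => h.2 rfl)]
        exact ⟨by norm_num, le_refl _, fun h => absurd rfl h⟩
      · obtain ⟨x, hx'⟩ := WithTop.ne_top_iff_exists.mp hx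
        have hx : d k = (x : WithTop ℤ) := hx'.symm
        have hbx : b + 1 ≤ x := aboveTop d hcd (show i + 1 ≤ n by omega) hdb k hkgt hx
        have hbxQ : (b : ℚ) < x := by exact_mod_cast (show b < x by omega)
        have haxQ : (a : ℚ) < x := by exact_mod_cast (show a < x by omega)
        rcases eq_or_ne (e k) ⊤ with hy | hy
        · rw [hx, hy,
            if_pos (show k ≠ I ∧ ((x : ℤ) : WithTop ℤ) ≠ ⊤ from ⟨hkI, WithTop.coe_ne_top⟩),
            if_neg (show ¬(k ≠ I1 ∧ (⊤ : WithTop ℤ) ≠ ⊤) from fun h => h.2 rfl),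
            if_neg (show ¬(k ≠ I ∧ (⊤ : WithTop ℤ) ≠ ⊤) from fun h => h.2 rfl),
            if_pos (show k ≠ I1 ∧ ((x : ℤ) : WithTop ℤ) ≠ ⊤ from ⟨hkI1, WithTop.coe_ne_top⟩),
            WithTop.untopD_coe, mul_one, one_mul]
          have hlt := key2 habQ hbxQ
          exact ⟨pos_fac haxQ.ne, hlt.le, fun _ => hlt⟩
        · obtain ⟨y, hy'⟩ := WithTop.ne_top_iff_exists.mp hy
          have hy : e k = (y : WithTop ℤ) := hy'.symm
          have hxy : x ≤ y := by
            have := hle k; rw [hx, hy] at this; exact_mod_cast this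
          have hxyQ : (x : ℚ) ≤ y := by exact_mod_cast hxy
          have hbyQ : (b : ℚ) < y := by exact_mod_cast (show b < y by omega)
          rw [hx, hy,
            if_pos (show k ≠ I ∧ ((x : ℤ) : WithTop ℤ) ≠ ⊤ from ⟨hkI, WithTop.coe_ne_top⟩),
            if_pos (show k ≠ I1 ∧ ((y : ℤ) : WithTop ℤ) ≠ ⊤ from ⟨hkI1, WithTop.coe_ne_top⟩),
            if_pos (show k ≠ I ∧ ((y : ℤ) : WithTop ℤ) ≠ ⊤ from ⟨hkI, WithTop.coe_ne_top⟩),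
            if_pos (show k ≠ I1 ∧ ((x : ℤ) : WithTop ℤ) ≠ ⊤ from ⟨hkI1, WithTop.coe_ne_top⟩),
            WithTop.untopD_coe, WithTop.untopD_coe]
          refine ⟨mul_pos (pos_fac haxQ.ne) (pos_fac hbyQ.ne), ?_, ?_⟩
          · exact key_le habQ hxyQ (Or.inr hbxQ)
          · intro hne'
            have hxy' : x < y := lt_of_le_of_ne hxy (fun h => hne' (by rw [h]))
            exact key_lt habQ (by exact_mod_cast hxy') (Or.inr hbxQ)
  have e1 : bettiTop d I = ∏ k,
      (if k ≠ I ∧ d k ≠ ⊤ then (1:ℚ) / |((a : ℤ) : ℚ) - (((d k).untopD 0 : ℤ) : ℚ)| else 1) := by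
    rw [bettiTop, Finset.prod_filter]
    exact Finset.prod_congr rfl fun k _ => by rw [hda, WithTop.untopD_coe]
  have e2 : bettiTop e I1 = ∏ k,
      (if k ≠ I1 ∧ e k ≠ ⊤ then (1:ℚ) / |((b : ℤ) : ℚ) - (((e k).untopD 0 : ℤ) : ℚ)| else 1) := by
    rw [bettiTop, Finset.prod_filter]
    exact Finset.prod_congr rfl fun k _ => by rw [heb, WithTop.untopD_coe]
  have e3 : bettiTop e I = ∏ k,
      (if k ≠ I ∧ e k ≠ ⊤ then (1:ℚ) / |((a : ℤ) : ℚ) - (((e k).untopD 0 : ℤ) : ℚ)| else 1) := by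
    rw [bettiTop, Finset.prod_filter]
    exact Finset.prod_congr rfl fun k _ => by rw [hea, WithTop.untopD_coe]
  have e4 : bettiTop d I1 = ∏ k,
      (if k ≠ I1 ∧ d k ≠ ⊤ then (1:ℚ) / |((b : ℤ) : ℚ) - (((d k).untopD 0 : ℤ) : ℚ)| else 1) := by
    rw [bettiTop, Finset.prod_filter]
    exact Finset.prod_congr rfl fun k _ => by rw [hdb, WithTop.untopD_coe]
  rw [e1, e2, e3, e4, ← Finset.prod_mul_distrib, ← Finset.prod_mul_distrib]
  exact Finset.prod_lt_prod (fun k _ => (key k).1) (fun k _ => (key k).2.1)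
    ⟨k0, Finset.mem_univ _, (key k0).2.2 hk0⟩
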